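/- For polynomials over ℝ, define for g(x) ∈ ℝ[x] and r ≥ 1 the r-section g^{⟨r,i⟩} by g(x) = ∑_{i=0}^{r-1} x^i · g^{⟨r,i⟩}(x^r). Let c_{n,r}(x) = (1 + x + ... + x^{r-1})^n. Then for r ≥ m ≥ 1: (c_{m,r}(x))^{⟨r,0⟩} − (c_{m-1,r}(x)·(1 + x + ... + x^{m-1}))^{⟨r,0⟩} = ∑_{i=m}^{r-1} x · (c_{m-1,r}(x))^{⟨r,r-i⟩}. -/

import Mathlib

open Polynomial Finset

/-- The `i`-th `r`-section `g^{⟨r,i⟩}` of a real polynomial `g`, defined by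
`g(x) = ∑_{i=0}^{r-1} x^i g^{⟨r,i⟩}(x^r)`. -/
noncomputable def rsection (r i : ℕ) (g : ℝ[X]) : ℝ[X] :=
  ∑ j ∈ Finset.range (g.natDegree + 1), Polynomial.C (g.coeff (r * j + i)) * X ^ j

lemma coeff_rsection (r i : ℕ) (hr : 1 ≤ r) (g : ℝ[X]) (j : ℕ) :
    (rsection r i g).coeff j = g.coeff (r * j + i) := by
  unfold rsection
  rw [finset_sum_coeff]
  simp only [coeff_C_mul, coeff_X_pow, mul_ite, mul_one, mul_zero]
  by_cases hj : j < g.natDegree + 1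
  · rw [Finset.sum_eq_single j]
    · simp
    · intro b _ hb; simp [Ne.symm hb]
    · intro h; exact absurd (Finset.mem_range.mpr hj) h
  · rw [Finset.sum_eq_zero, eq_comm]
    · apply coeff_eq_zero_of_natDegree_lt
      have : g.natDegree + 1 ≤ j := not_lt.mp hj
      nlinarith
    · intro b hb
      rw [Finset.mem_range] at hb
      have hbj : j ≠ b := by omega
      simp [hbj, Ne.symm hbj]

/-- The section identity from Example 7.2 of the paper, where
`c_{m,r}(x) = (1 + x + ⋯ + x^{r-1})^m`. -/
theorem stmt_12 (r m : ℕ) (hm : 1 ≤ m) (hmr : m ≤ r) :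
    rsection r 0 ((∑ i ∈ range r, (X : ℝ[X]) ^ i) ^ m)
      - rsection r 0 ((∑ i ∈ range r, (X : ℝ[X]) ^ i) ^ (m - 1) * ∑ i ∈ range m, X ^ i)
      = ∑ i ∈ Icc m (r - 1), X * rsection r (r - i) ((∑ i ∈ range r, (X : ℝ[X]) ^ i) ^ (m - 1)) := by
  have hr : 1 ≤ r := hm.trans hmr
  set p : ℝ[X] := ∑ i ∈ range r, (X : ℝ[X]) ^ i with hp
  set d : ℝ[X] := p ^ (m - 1) with hd
  have hsplit : p = (∑ i ∈ range m, (X : ℝ[X]) ^ i) + ∑ i ∈ Icc m (r - 1), X ^ i := by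
    rw [hp, Finset.range_eq_Ico, ← Finset.sum_Ico_consecutive _ (Nat.zero_le m) hmr,
      ← Finset.range_eq_Ico]
    have : Finset.Ico m r = Finset.Icc m (r - 1) := by
      rw [← Finset.Ico_add_one_right_eq_Icc]; congr 1; omega
    rw [this]
  have hc : p ^ m = d * (∑ i ∈ range m, (X : ℝ[X]) ^ i) + d * ∑ i ∈ Icc m (r - 1), X ^ i := by
    conv_lhs => rw [show m = (m - 1) + 1 by omega]
    rw [pow_succ, ← hd]
    conv_lhs => rw [hsplit]
    rw [mul_add]
  ext n
  rw [coeff_sub, coeff_rsection r 0 hr, coeff_rsection r 0 hr, hc, add_zero, coeff_add,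
    add_sub_cancel_left, Finset.mul_sum, finset_sum_coeff, finset_sum_coeff]
  apply Finset.sum_congr rfl
  intro i hi
  rw [Finset.mem_Icc] at hi
  rw [coeff_mul_X_pow', mul_comm X, ← pow_one (X : ℝ[X]), coeff_mul_X_pow']
  rcases Nat.eq_zero_or_pos n with hn | hn
  · subst hn
    have h1 : ¬ i ≤ r * 0 := by omega
    simp only [if_neg h1, Nat.not_succ_le_zero, if_neg (by omega : ¬ (1:ℕ) ≤ 0)]
  · obtain ⟨k, rfl⟩ := Nat.exists_eq_add_of_le hn
    have h1 : i ≤ r * (1 + k) := by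
      have : r ≤ r * (1 + k) := Nat.le_mul_of_pos_right r (by omega)
      omega
    have h2 : (1 : ℕ) ≤ 1 + k := by omega
    rw [if_pos h1, if_pos h2, coeff_rsection r _ hr]
    congr 1
    have e2 : r * (1 + k) = r * k + r := by ring
    simp only [show Nat.succ 0 + k = 1 + k from rfl, e2, Nat.add_sub_cancel_left]
    omega
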